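/- Let Q(t) ∈ ℤ[t] be monic of degree r with Q mod 2 irreducible and odd constant coefficient, and let λ be the multiplicative order of t in (ℤ/2)[t]/(Q). If Q(t) satisfies Condition S, then for all w ≥ 3, t^{2^{w−2} λ} ≡ 1 (mod 2^w, Q). -/

import Mathlib

open Polynomial

def conditionS (Q : Polynomial ℤ) : Prop :=
  (Q ^ 2 + (Q.comp (-X)) ^ 2).map (Int.castRingHom (ZMod 8)) =
    (C (2 * Q.leadingCoeff) * Q.comp (X ^ 2)).map (Int.castRingHom (ZMod 8))

lemma exists_two_mul {p : ℤ[X]} (h : p.map (Int.castRingHom (ZMod 2)) = 0) :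
    ∃ q, p = 2 * q := by
  have h2 : (C (2:ℤ)) ∣ p := by
    rw [Polynomial.C_dvd_iff_dvd_coeff]
    intro i
    have := congrArg (fun q => Polynomial.coeff q i) h
    simpa [Polynomial.coeff_map, ZMod.intCast_zmod_eq_zero_iff_dvd] using this
  obtain ⟨q, hq⟩ := h2
  exact ⟨q, by simpa using hq⟩

lemma comp_sq (f : (ZMod 2)[X]) : f.comp (X^2) = f^2 := by
  have := Polynomial.map_frobenius_expand 2 f
  rw [ZMod.frobenius_zmod, Polynomial.map_id] at this
  rw [← this, Polynomial.expand_eq_comp_X_pow]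

lemma neg_X_eq : (-X : (ZMod 2)[X]) = X := by
  have h : (-1 : (ZMod 2)[X]) = 1 := by
    have : (-1 : ZMod 2) = 1 := rfl
    rw [← Polynomial.C_1, ← Polynomial.C_neg, this]
  calc (-X : (ZMod 2)[X]) = (-1) * X := by ring
  _ = X := by rw [h, one_mul]

lemma map2_comp_neg (p : ℤ[X]) :
    (p.comp (-X)).map (Int.castRingHom (ZMod 2)) = p.map (Int.castRingHom (ZMod 2)) := by
  rw [Polynomial.map_comp]
  simp [neg_X_eq]

lemma eight_to_two {p : ℤ[X]} (h : (4 * p).map (Int.castRingHom (ZMod 8)) = 0) :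
    p.map (Int.castRingHom (ZMod 2)) = 0 := by
  ext i
  have := congrArg (fun q => Polynomial.coeff q i) h
  simp only [Polynomial.coeff_map] at this ⊢
  have h8 : (8:ℤ) ∣ 4 * p.coeff i := by
    have h' : (((4 * p).coeff i : ℤ) : ZMod 8) = 0 := this
    rwa [ZMod.intCast_zmod_eq_zero_iff_dvd, Polynomial.coeff_ofNat_mul] at h'
  have h2 : (2:ℤ) ∣ p.coeff i := by omega
  simp [ZMod.intCast_zmod_eq_zero_iff_dvd, h2]

lemma base (Q : Polynomial ℤ)
    (hmonic : Q.Monic) (hconst : Odd (Q.coeff 0))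
    (hirr : Irreducible (Q.map (Int.castRingHom (ZMod 2))))
    (lam : ℕ)
    (hlam : lam = orderOf (Ideal.Quotient.mk
      (Ideal.span {Q.map (Int.castRingHom (ZMod 2))}) (X : Polynomial (ZMod 2))))
    (hlamodd : Odd lam)
    (hS : conditionS Q) :
    (X : ℤ[X]) ^ (2 * lam) - 1 ∈
      Ideal.span ({C ((2 : ℤ) ^ 3), Q} : Set (Polynomial ℤ)) := by
  set m2 := Int.castRingHom (ZMod 2) with hm2
  set q : (ZMod 2)[X] := Q.map m2 with hqdef
  have hqmonic : q.Monic := hmonic.map _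
  -- q divides X^lam - 1 mod 2
  have hQdvd : q ∣ (X : (ZMod 2)[X]) ^ lam - 1 := by
    have h0 : (Ideal.Quotient.mk (Ideal.span {q}) ((X : (ZMod 2)[X]) ^ lam - 1)) = 0 := by
      rw [map_sub, map_pow, map_one, hlam]
      rw [pow_orderOf_eq_one, sub_self]
    rw [← Ideal.mem_span_singleton]
    exact (Ideal.Quotient.eq_zero_iff_mem).mp h0
  -- U with Q(-X) = Q + 2U
  obtain ⟨U, hU⟩ : ∃ U, Q.comp (-X) - Q = 2 * U := by
    apply exists_two_mul
    rw [Polynomial.map_sub, map2_comp_neg, sub_self]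
  -- W with Q(X^2) = Q^2 + 2W
  obtain ⟨W, hW⟩ : ∃ W, Q.comp (X^2) - Q^2 = 2 * W := by
    apply exists_two_mul
    rw [Polynomial.map_sub, Polynomial.map_comp, Polynomial.map_pow, Polynomial.map_pow,
      Polynomial.map_X]
    rw [comp_sq, sub_self]
  -- K, E with X^lam - 1 = Q*K + 2*E
  set K : ℤ[X] := ((X : ℤ[X]) ^ lam - 1) /ₘ Q with hKdef
  obtain ⟨E, hE⟩ : ∃ E, ((X : ℤ[X]) ^ lam - 1) %ₘ Q = 2 * E := by
    apply exists_two_mul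
    rw [Polynomial.map_modByMonic _ hmonic]
    rw [Polynomial.modByMonic_eq_zero_iff_dvd (hmonic.map _)]
    rw [Polynomial.map_sub, Polynomial.map_pow, Polynomial.map_X, Polynomial.map_one]
    exact hQdvd
  have hQK : (X : ℤ[X]) ^ lam - 1 = Q * K + 2 * E := by
    have := Polynomial.modByMonic_add_div ((X : ℤ[X]) ^ lam - 1) Q
    rw [hE] at this
    rw [hKdef]
    linear_combination -this
  -- Condition S in the form w = q*u + u^2 (mod 2)
  have hS2 : (Q * U + U ^ 2 - W).map m2 = 0 := by
    apply eight_to_two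
    have hld : Q.leadingCoeff = 1 := hmonic.leadingCoeff
    have hCS : ((Q ^ 2 + (Q.comp (-X)) ^ 2) - (C (2 * Q.leadingCoeff) * Q.comp (X ^ 2))).map
        (Int.castRingHom (ZMod 8)) = 0 := by
      rw [Polynomial.map_sub, hS, sub_self]
    have hpoly : (Q ^ 2 + (Q.comp (-X)) ^ 2) - (C (2 * Q.leadingCoeff) * Q.comp (X ^ 2)) =
        4 * (Q * U + U ^ 2 - W) := by
      rw [hld]
      have hC2 : (C (2 * 1) : ℤ[X]) = 2 := by norm_num
      rw [hC2]
      linear_combination (Q.comp (-X) + Q + 2 * U) * hU - 2 * hW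
    rw [← hpoly]
    exact hCS
  -- N1 with K(X^2) - K^2 = 2*N1
  obtain ⟨N1, hN1⟩ : ∃ N1, K.comp (X^2) - K^2 = 2 * N1 := by
    apply exists_two_mul
    rw [Polynomial.map_sub, Polynomial.map_comp, Polynomial.map_pow, Polynomial.map_X,
      Polynomial.map_pow, comp_sq, sub_self]
  -- main identity mod small powers of 2
  set M : ℤ[X] := 2*Q*K*E + 2*E^2 + Q*K + 2*E - W * K.comp (X^2) - E.comp (X^2) with hMdef
  have hcomp : (X:ℤ[X]) ^ (2*lam) - 1 = Q.comp (X^2) * K.comp (X^2) + 2 * E.comp (X^2) := by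
    have h := congrArg (fun p : ℤ[X] => p.comp (X^2)) hQK
    simp only [Polynomial.sub_comp, Polynomial.add_comp, Polynomial.mul_comp,
      Polynomial.pow_comp, Polynomial.X_comp, Polynomial.one_comp, Polynomial.ofNat_comp] at h
    rw [← pow_mul] at h
    exact_mod_cast h
  have hsq : (X:ℤ[X]) ^ (2*lam) - 1 = (Q*K + 2*E)^2 + 2*(Q*K + 2*E) := by
    rw [mul_comm 2 lam, pow_mul]
    linear_combination ((X:ℤ[X])^lam + 1 + Q*K + 2*E) * hQK
  have hM : Q^2 * (K.comp (X^2) - K^2) = 2 * M := by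
    rw [hMdef]
    linear_combination (-1 : ℤ[X]) * hcomp + hsq + (-(K.comp (X^2))) * hW
  have hMQ : M = Q^2 * N1 := by
    have h2 : (2:ℤ[X]) * M = 2 * (Q^2 * N1) := by
      rw [← hM, hN1]; ring
    have h2ne : (2:ℤ[X]) ≠ 0 := by
      intro h
      have := congrArg (fun p : ℤ[X] => p.coeff 0) h
      norm_num at this
    exact mul_left_cancel₀ h2ne h2
  -- pass to ZMod 2
  set k : (ZMod 2)[X] := K.map m2 with hkdef
  set e : (ZMod 2)[X] := E.map m2 with hedef
  set u : (ZMod 2)[X] := U.map m2 with hudef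
  set w : (ZMod 2)[X] := W.map m2 with hwdef
  set n1 : (ZMod 2)[X] := N1.map m2 with hn1def
  have h2z : (2 : (ZMod 2)[X]) = 0 := CharTwo.two_eq_zero
  have hMbar : q*k + w*k^2 + e^2 = q^2 * n1 := by
    have h := congrArg (fun p : ℤ[X] => p.map m2) hMQ
    simp only [hMdef, Polynomial.map_sub, Polynomial.map_add, Polynomial.map_mul,
      Polynomial.map_pow, Polynomial.map_ofNat, Polynomial.map_comp, Polynomial.map_X] at h
    simp only [comp_sq] at h
    rw [← hqdef, ← hkdef, ← hedef, ← hwdef, ← hn1def] at h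
    rw [h2z] at h
    linear_combination h + (w*k^2 + e^2) * h2z
  have hwbar : w = q*u + u^2 := by
    have h := hS2
    rw [Polynomial.map_sub, Polynomial.map_add, Polynomial.map_mul, Polynomial.map_pow] at h
    rw [← hqdef, ← hudef, ← hwdef] at h
    linear_combination -h
  have hdvdsq : q ∣ (e + u*k)^2 := by
    refine ⟨q*n1 - k - u*k^2, ?_⟩
    have hch : (e + u*k)^2 = e^2 + u^2*k^2 := by
      have h' : (e + u*k)^2 = e^2 + 2*(e*(u*k)) + u^2*k^2 := by ring
      rw [h', h2z]; ring
    rw [hch]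
    linear_combination hMbar - k^2 * hwbar
  have hqprime : Prime q := UniqueFactorizationMonoid.irreducible_iff_prime.mp hirr
  have hdvd1 : q ∣ e + u*k := hqprime.dvd_of_dvd_pow hdvdsq
  -- lift back
  set K' : ℤ[X] := K.comp (-X) with hK'def
  set E' : ℤ[X] := E.comp (-X) with hE'def
  have hZbar : (E*(U*K' + E')).map m2 = e*(e + u*k) := by
    rw [hK'def, hE'def]
    simp only [Polynomial.map_mul, Polynomial.map_add, hm2, map2_comp_neg]
    rw [← hm2, ← hedef, ← hudef, ← hkdef]
    ring
  obtain ⟨sb, hsb⟩ := (Dvd.dvd.mul_left hdvd1 e : q ∣ e*(e + u*k))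
  obtain ⟨S, hSm⟩ := Polynomial.map_surjective m2 ZMod.intCast_surjective sb
  obtain ⟨T, hT⟩ : ∃ T, E*(U*K' + E') - Q*S = 2*T := by
    apply exists_two_mul
    rw [Polynomial.map_sub, hZbar, Polynomial.map_mul, hSm, ← hqdef, hsb, sub_self]
  have hZ : E*(U*K' + E') = Q*S + 2*T := by linear_combination hT
  -- negative substitution
  have hneg : -(X:ℤ[X])^lam - 1 = (Q + 2*U)*K' + 2*E' := by
    have h := congrArg (fun p : ℤ[X] => p.comp (-X)) hQK
    simp only [Polynomial.sub_comp, Polynomial.add_comp, Polynomial.mul_comp,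
      Polynomial.pow_comp, Polynomial.X_comp, Polynomial.one_comp, Polynomial.ofNat_comp] at h
    rw [Odd.neg_pow hlamodd] at h
    rw [← hK'def, ← hE'def] at h
    have hQU : Q.comp (-X) = Q + 2*U := by linear_combination hU
    rw [hQU] at h
    exact_mod_cast h
  -- final assembly
  rw [Ideal.mem_span_pair]
  refine ⟨-T, -(K*((Q+2*U)*K') + 2*(K*E') + 2*(E*K')) - 4*S, ?_⟩
  have hC8 : (C ((2:ℤ)^3) : ℤ[X]) = 8 := by norm_num
  rw [hC8, mul_comm 2 lam, pow_mul]
  linear_combination ((Q + 2*U)*K' + 2*E') * hQK + ((X:ℤ[X])^lam - 1) * hneg + 4 * hZ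


lemma odd_lam (Q : Polynomial ℤ) (hmonic : Q.Monic) (hconst : Odd (Q.coeff 0))
    (hirr : Irreducible (Q.map (Int.castRingHom (ZMod 2)))) :
    Odd (orderOf (Ideal.Quotient.mk
      (Ideal.span {Q.map (Int.castRingHom (ZMod 2))}) (X : Polynomial (ZMod 2)))) := by
  set q : (ZMod 2)[X] := Q.map (Int.castRingHom (ZMod 2)) with hq
  letI : (Ideal.span {q}).IsMaximal := PrincipalIdealRing.isMaximal_of_irreducible hirr
  letI F := (ZMod 2)[X] ⧸ Ideal.span {q}
  letI : Field F := Ideal.Quotient.field _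
  have hqmonic : q.Monic := hmonic.map _
  letI : Module.Finite (ZMod 2) F :=
    Module.Finite.of_basis (AdjoinRoot.powerBasis' hqmonic).basis
  letI : Finite F := Module.finite_of_finite (ZMod 2)
  letI : Fintype F := Fintype.ofFinite F
  have hchar : CharP F 2 := by
    have : Function.Injective (algebraMap (ZMod 2) F) := (algebraMap (ZMod 2) F).injective
    exact charP_of_injective_ringHom this 2
  obtain ⟨n, hp, hcard⟩ := FiniteField.card F 2
  set x : F := Ideal.Quotient.mk (Ideal.span {q}) (X : Polynomial (ZMod 2)) with hx
  have hx0 : x ≠ 0 := by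
    intro h0
    have hmem : (X : (ZMod 2)[X]) ∈ Ideal.span {q} := (Ideal.Quotient.eq_zero_iff_mem).mp h0
    obtain ⟨g, hg⟩ := Ideal.mem_span_singleton.mp hmem
    have hq0 : q.coeff 0 = 1 := by
      rw [hq, Polynomial.coeff_map]
      obtain ⟨k, hk⟩ := hconst
      rw [hk]
      have h21 : ((2 * k + 1 : ℤ) : ZMod 2) = 1 := by
        push_cast
        rw [show ((2:ZMod 2)) = 0 from rfl]; ring
      simpa using h21
    have hg0 : g.coeff 0 = 0 := by
      have := congrArg (fun p => Polynomial.coeff p 0) hg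
      simpa [Polynomial.mul_coeff_zero, hq0] using this.symm
    have hgne : g ≠ 0 := by
      rintro rfl
      simp at hg
    have hdeg : (1 : ℕ) = q.natDegree + g.natDegree := by
      have := Polynomial.natDegree_mul (p := q) (q := g) hirr.ne_zero hgne
      simpa [← hg] using this
    have hq1 : 1 ≤ q.natDegree := by
      rcases Nat.eq_zero_or_pos q.natDegree with h | h
      · exfalso
        exact hirr.not_isUnit (Polynomial.isUnit_iff_degree_eq_zero.mpr
          (by rw [Polynomial.degree_eq_natDegree hirr.ne_zero, h]; rfl))
      · exact h
    have hgdeg : g.natDegree = 0 := by omega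
    have : g = Polynomial.C (g.coeff 0) := Polynomial.eq_C_of_natDegree_eq_zero hgdeg
    rw [hg0] at this
    simp [this] at hgne
  have hdvd : orderOf x ∣ Fintype.card F - 1 :=
    orderOf_dvd_of_pow_eq_one (FiniteField.pow_card_sub_one_eq_one x hx0)
  rw [hcard] at hdvd
  have hodd : Odd (2 ^ (n:ℕ) - 1) := by
    have h1 : 1 ≤ 2 ^ (n:ℕ) := Nat.one_le_two_pow
    have heven : Even (2 ^ (n:ℕ)) :=
      (Nat.even_pow).mpr ⟨even_two, by exact_mod_cast n.ne_zero⟩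
    exact Nat.Even.sub_odd h1 heven odd_one
  obtain ⟨c, hc⟩ := hdvd
  exact (Nat.odd_mul.mp (hc ▸ hodd)).1


lemma step (Q : Polynomial ℤ) (v N : ℕ)
    (h : (X : ℤ[X]) ^ N - 1 ∈ Ideal.span ({C ((2:ℤ) ^ (v+1)), Q} : Set (Polynomial ℤ))) :
    (X : ℤ[X]) ^ (2 * N) - 1 ∈ Ideal.span ({C ((2:ℤ) ^ (v+2)), Q} : Set (Polynomial ℤ)) := by
  rw [Ideal.mem_span_pair] at h ⊢
  obtain ⟨a, b, hab⟩ := h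
  have hCpow : ∀ m : ℕ, (C ((2:ℤ) ^ m) : ℤ[X]) = 2 ^ m := by
    intro m
    rw [map_pow]
    norm_num
  rw [hCpow] at hab
  refine ⟨2 ^ v * a ^ 2 + a, 2 ^ (v+1) * 2 * a * b + Q * b ^ 2 + 2 * b, ?_⟩
  rw [hCpow, mul_comm 2 N, pow_mul]
  have key : ((X:ℤ[X]) ^ N) ^ 2 - 1 = ((X:ℤ[X])^N - 1)^2 + 2 * ((X:ℤ[X])^N - 1) := by ring
  rw [key, ← hab]
  ring

theorem stmt13 (Q : Polynomial ℤ) (r : ℕ) (hr : Q.natDegree = r)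
    (hmonic : Q.Monic) (hconst : Odd (Q.coeff 0))
    (hirr : Irreducible (Q.map (Int.castRingHom (ZMod 2))))
    (lam : ℕ)
    (hlam : lam = orderOf (Ideal.Quotient.mk
      (Ideal.span {Q.map (Int.castRingHom (ZMod 2))}) (X : Polynomial (ZMod 2))))
    (hS : conditionS Q) :
    ∀ w : ℕ, 3 ≤ w →
      X ^ (2 ^ (w - 2) * lam) - 1 ∈
        Ideal.span ({C ((2 : ℤ) ^ w), Q} : Set (Polynomial ℤ)) := by
  have hlamodd : Odd lam := hlam ▸ odd_lam Q hmonic hconst hirr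
  intro w hw
  induction w, hw using Nat.le_induction with
  | base =>
    have h := base Q hmonic hconst hirr lam hlam hlamodd hS
    simpa using h
  | succ w hw ih =>
    have h := step Q (w - 1) (2 ^ (w - 2) * lam) (by
      have hww : (w - 1) + 1 = w := by omega
      rw [hww]
      exact ih)
    have h1 : w + 1 - 2 = (w - 2) + 1 := by omega
    have h2 : (w - 1) + 2 = w + 1 := by omega
    rw [h2] at h
    have hexp : 2 * (2 ^ (w - 2) * lam) = 2 ^ (w + 1 - 2) * lam := by
      rw [h1, pow_succ]; ring
    rw [hexp] at h
    exact h
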